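/- Let (X, X⁺) be an ordered Banach space with total cone and let M' > 0 be such that every functional x' ∈ X' decomposes as x' = z' − y' with z', y' positive functionals of norm at most M'‖x'‖. Then for each x ∈ X⁺ of norm 1 there exists a positive functional z' ∈ (X')⁺ with ‖z'‖ ≤ M' and ⟨z', x⟩ ≥ 1. -/

import Mathlib

/-- If every functional on `X` decomposes as a difference of positive functionals
of norm at most `M'` times the original norm, then every unit vector in the cone
is normed by some positive functional of norm at most `M'`. -/
theorem exists_positive_functional_norming
    {X : Type*} [NormedAddCommGroup X] [NormedSpace ℝ X] [CompleteSpace X]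
    (K : Set X) (hclosed : IsClosed K)
    (hadd : ∀ x ∈ K, ∀ y ∈ K, x + y ∈ K)
    (hsmul : ∀ (a : ℝ), 0 ≤ a → ∀ x ∈ K, a • x ∈ K)
    (hpointed : K ∩ (-K) = {0})
    (htotal : Dense {x : X | ∃ y ∈ K, ∃ z ∈ K, x = y - z})
    (M' : ℝ) (hM' : 0 < M')
    (hdecomp : ∀ f : X →L[ℝ] ℝ, ∃ z' y' : X →L[ℝ] ℝ,
      (∀ v ∈ K, 0 ≤ z' v) ∧ (∀ v ∈ K, 0 ≤ y' v) ∧ f = z' - y' ∧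
      ‖z'‖ ≤ M' * ‖f‖ ∧ ‖y'‖ ≤ M' * ‖f‖) :
    ∀ x ∈ K, ‖x‖ = 1 →
      ∃ z' : X →L[ℝ] ℝ, (∀ v ∈ K, 0 ≤ z' v) ∧ ‖z'‖ ≤ M' ∧ 1 ≤ z' x := by
  intro x hx hx1
  have hx0 : x ≠ 0 := by intro h; simp [h] at hx1
  obtain ⟨f, hf1, hfx⟩ := exists_dual_vector ℝ x (norm_ne_zero_iff.mpr hx0)
  obtain ⟨z', y', hz, hy, hfzy, hzn, hyn⟩ := hdecomp f
  refine ⟨z', hz, by simpa [hf1] using hzn, ?_⟩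
  have : z' x = f x + y' x := by rw [hfzy]; simp
  have hfx' : f x = 1 := by simpa [hx1] using hfx
  have := hy x hx
  linarith [hfx' ▸ ‹z' x = f x + y' x›]
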